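/- Let φ : ℝ → ℂ be continuous with compact support and let Φ : ℝ → ℂ be continuous and integrable. Suppose that the Fourier transforms satisfy Φ̂(ω) = |φ̂(ω)|² for all ω ∈ ℝ, and that Φ(j) = δ_{0,j} for all integers j. Then the integer translates of φ form an orthonormal system in L²(ℝ): ∫_{-∞}^{∞} φ(t-k) · conj(φ(t-l)) dt = δ_{k,l} for all k, l ∈ ℤ. -/

import Mathlib

open MeasureTheory
open scoped FourierTransform Real RealInnerProductSpace

/-- The integrand `φ(t)·conj(φ(t-x))·exp(-Ixω)` is integrable in `(x,t)` when `φ` is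
continuous with compact support. -/
private lemma aux_fubini (φ : ℝ → ℂ) (hφc : Continuous φ) (hφcs : HasCompactSupport φ) (ω : ℝ) :
    ∫ x : ℝ, ∫ t : ℝ, φ t * (starRingEnd ℂ) (φ (t - x)) * Complex.exp (-Complex.I * x * ω)
      = ∫ t : ℝ, ∫ x : ℝ, φ t * (starRingEnd ℂ) (φ (t - x)) * Complex.exp (-Complex.I * x * ω) := by
  set S := tsupport φ with hS
  have hScomp : IsCompact S := hφcs
  apply integral_integral_swap_of_hasCompactSupport
  · have : Continuous fun p : ℝ × ℝ =>
        φ p.2 * (starRingEnd ℂ) (φ (p.2 - p.1)) * Complex.exp (-Complex.I * p.1 * ω) := by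
      apply Continuous.mul
      · exact (hφc.comp continuous_snd).mul
          (Complex.continuous_conj.comp (hφc.comp (continuous_snd.sub continuous_fst)))
      · exact Complex.continuous_exp.comp (by fun_prop)
    exact this
  · apply HasCompactSupport.intro
      (K := ((fun p : ℝ × ℝ => p.1 - p.2) '' (S ×ˢ S)) ×ˢ S)
      (((hScomp.prod hScomp).image (continuous_fst.sub continuous_snd)).prod hScomp)
    rintro ⟨x, t⟩ hxt
    by_cases ht : t ∈ S
    · by_cases htx : t - x ∈ S
      · exact absurd ⟨⟨(t, t - x), ⟨ht, htx⟩, by simp⟩, ht⟩ hxt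
      · have : φ (t - x) = 0 := image_eq_zero_of_notMem_tsupport htx
        simp [Function.uncurry, this]
    · have : φ t = 0 := image_eq_zero_of_notMem_tsupport ht
      simp [Function.uncurry, this]

theorem stmt_14 (φ : ℝ → ℂ) (hφc : Continuous φ) (hφcs : HasCompactSupport φ)
    (Φ : ℝ → ℂ) (hΦc : Continuous Φ) (hΦint : Integrable Φ)
    (hFT : ∀ ω : ℝ,
      (∫ x : ℝ, Φ x * Complex.exp (-(Complex.I) * x * ω))
        = ((‖∫ x : ℝ, φ x * Complex.exp (-(Complex.I) * x * ω)‖) ^ 2 : ℂ))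
    (hinterp : ∀ j : ℤ, Φ (j : ℝ) = if j = 0 then 1 else 0) :
    ∀ k l : ℤ,
      (∫ t : ℝ, φ (t - k) * (starRingEnd ℂ) (φ (t - l)))
        = if k = l then 1 else 0 := by
  have hφint : Integrable φ := hφc.integrable_of_hasCompactSupport hφcs
  set A : ℝ → ℂ := fun x => ∫ t : ℝ, φ t * (starRingEnd ℂ) (φ (t - x)) with hA
  set g : ℝ → ℂ := fun u => (starRingEnd ℂ) (φ (-u)) with hg
  have hgc : Continuous g := Complex.continuous_conj.comp (hφc.comp continuous_neg)
  have hgcs : HasCompactSupport g := by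
    have h1 : HasCompactSupport fun u : ℝ => φ (-u) :=
      hφcs.comp_homeomorph (Homeomorph.neg ℝ)
    exact h1.comp_left (g := starRingEnd ℂ) (map_zero _)
  have hAconv : A = convolution φ g (ContinuousLinearMap.mul ℂ ℂ) volume := by
    funext x
    simp only [hA, convolution_def, ContinuousLinearMap.mul_apply', hg, neg_sub]
  have hAc : Continuous A := by
    rw [hAconv]
    exact hgcs.continuous_convolution_right _ hφint.locallyIntegrable hgc
  have hAcs : HasCompactSupport A := by
    rw [hAconv]
    exact HasCompactSupport.convolution (ContinuousLinearMap.mul ℂ ℂ) hφcs hgcs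
  have hAint : Integrable A := hAc.integrable_of_hasCompactSupport hAcs
  -- Fourier transform of the autocorrelation
  have key : ∀ ω : ℝ, (∫ x : ℝ, A x * Complex.exp (-Complex.I * x * ω))
      = (∫ x : ℝ, φ x * Complex.exp (-Complex.I * x * ω)) *
        (starRingEnd ℂ) (∫ x : ℝ, φ x * Complex.exp (-Complex.I * x * ω)) := by
    intro ω
    have h1 : ∀ x : ℝ, A x * Complex.exp (-Complex.I * x * ω)
        = ∫ t : ℝ, φ t * (starRingEnd ℂ) (φ (t - x)) * Complex.exp (-Complex.I * x * ω) := by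
      intro x
      rw [hA]
      exact (integral_mul_const _ _).symm
    have h2 : ∀ t : ℝ, (∫ x : ℝ, φ t * (starRingEnd ℂ) (φ (t - x)) * Complex.exp (-Complex.I * x * ω))
        = φ t * Complex.exp (-Complex.I * t * ω) *
          (starRingEnd ℂ) (∫ u : ℝ, φ u * Complex.exp (-Complex.I * u * ω)) := by
      intro t
      have e1 : ∀ x : ℝ,
          φ t * (starRingEnd ℂ) (φ (t - x)) * Complex.exp (-Complex.I * x * ω)
          = (fun u : ℝ => φ t *
              ((starRingEnd ℂ) (φ u) * Complex.exp (-Complex.I * (t - u) * ω))) (t - x) := by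
        intro x
        show _ = φ t *
          ((starRingEnd ℂ) (φ (t - x)) * Complex.exp (-Complex.I * (↑t - ↑(t - x)) * ↑ω))
        have h : ((t : ℂ) - ((t - x : ℝ) : ℂ)) = (x : ℂ) := by push_cast; ring
        rw [h]; ring
      simp_rw [e1]
      rw [integral_sub_left_eq_self
        (fun u : ℝ => φ t * ((starRingEnd ℂ) (φ u) * Complex.exp (-Complex.I * (t - u) * ω))) volume t]
      have e2 : ∀ u : ℝ,
          φ t * ((starRingEnd ℂ) (φ u) * Complex.exp (-Complex.I * (t - u) * ω))
          = φ t * (Complex.exp (-Complex.I * t * ω) *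
              (starRingEnd ℂ) (φ u * Complex.exp (-Complex.I * u * ω))) := by
        intro u
        congr 1
        have harg : (-Complex.I * ((t : ℂ) - (u : ℂ)) * (ω : ℂ))
            = -Complex.I * t * ω + Complex.I * u * ω := by ring
        rw [harg, Complex.exp_add, map_mul, ← Complex.exp_conj]
        have hc : (starRingEnd ℂ) (-Complex.I * u * ω) = Complex.I * u * ω := by
          simp
        rw [hc]
        ring
      simp_rw [e2]
      rw [integral_const_mul, integral_const_mul, integral_conj]
      ring
    simp_rw [h1]
    rw [aux_fubini φ hφc hφcs ω]
    simp_rw [h2]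
    rw [integral_mul_const]
  -- integrability of the Fourier integrands
  have hmulint : ∀ (f : ℝ → ℂ), Integrable f → ∀ ω : ℝ,
      Integrable (fun x : ℝ => f x * Complex.exp (-Complex.I * x * ω)) := by
    intro f hf ω
    have : Integrable (fun x : ℝ => Complex.exp (-Complex.I * x * ω) * f x) := by
      apply hf.bdd_mul (c := 1)
      · exact (Complex.continuous_exp.comp (by fun_prop)).aestronglyMeasurable
      · refine Filter.Eventually.of_forall fun x => ?_
        rw [Complex.norm_exp]
        simp
    exact this.congr (Filter.Eventually.of_forall fun x => mul_comm _ _)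
  -- our FT of Φ - A vanishes
  have hEq : ∀ ω : ℝ, (∫ x : ℝ, Φ x * Complex.exp (-Complex.I * x * ω))
      = ∫ x : ℝ, A x * Complex.exp (-Complex.I * x * ω) := by
    intro ω
    rw [hFT ω, key ω, Complex.mul_conj]
    norm_cast
    exact Complex.sq_norm _
  -- mathlib Fourier transform of Φ - A vanishes
  have hFD : 𝓕 (fun x : ℝ => Φ x - A x) = fun _ : ℝ => (0 : ℂ) := by
    funext w
    rw [Real.fourier_eq']
    have e3 : ∀ x : ℝ, Complex.exp ((↑(-2 * π * ⟪x, w⟫) : ℂ) * Complex.I) • (Φ x - A x)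
        = Φ x * Complex.exp (-Complex.I * x * ((2 * π * w : ℝ) : ℂ))
          - A x * Complex.exp (-Complex.I * x * ((2 * π * w : ℝ) : ℂ)) := by
      intro x
      have hi : ⟪x, w⟫ = x * w := by simp [mul_comm]
      have harg : ((↑(-2 * π * ⟪x, w⟫) : ℂ) * Complex.I)
          = -Complex.I * (x : ℂ) * ((2 * π * w : ℝ) : ℂ) := by
        rw [hi]; push_cast; ring
      rw [smul_eq_mul, harg]
      ring
    simp_rw [e3]
    rw [integral_sub (hmulint Φ hΦint _) (hmulint A hAint _), hEq (2 * π * w), sub_self]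
  -- Fourier inversion : Φ = A
  have hΦA : ∀ x : ℝ, Φ x = A x := by
    intro x
    have hDint : Integrable (fun x : ℝ => Φ x - A x) := hΦint.sub hAint
    have hDc : Continuous (fun x : ℝ => Φ x - A x) := hΦc.sub hAc
    have hinv := hDc.fourierInv_fourier_eq hDint (by rw [hFD]; exact integrable_zero _ _ _)
    have h0 : 𝓕⁻ (𝓕 fun x : ℝ => Φ x - A x) x = 0 := by
      rw [hFD, Real.fourierInv_eq]
      simp
    have := congrFun hinv x
    rw [h0] at this
    exact sub_eq_zero.mp this.symm
  -- conclude
  intro k l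
  have hshift : (∫ t : ℝ, φ (t - k) * (starRingEnd ℂ) (φ (t - l))) = A ((l : ℝ) - k) := by
    rw [hA]
    show _ = ∫ t : ℝ, φ t * (starRingEnd ℂ) (φ (t - ((l : ℝ) - k)))
    rw [← integral_sub_right_eq_self (μ := volume)
      (fun t : ℝ => φ t * (starRingEnd ℂ) (φ (t - ((l : ℝ) - k)))) (k : ℝ)]
    congr 1
    funext t
    congr 2
    ring_nf
  rw [hshift, ← hΦA]
  have hcast : ((l : ℝ) - k) = ((l - k : ℤ) : ℝ) := by push_cast; ring
  rw [hcast, hinterp (l - k)]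
  have : l - k = 0 ↔ k = l := by omega
  simp only [this]
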